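/- Let N ∈ ℕ and let ι : ℂ → ℂ^{N×N} be analytic on the open ball B(0,R) with power series ι(λ) = Σ_{k≥0} ι_k λ^k on B(0,R), ι_0 invertible. Let z ∈ ℂ with z ≠ 0 and |1/z| < R, and let u = (u_j)_{j≥1} be a sequence of vectors in ℂ^N. Then the following are equivalent: (a) u_{j−1} = z·u_j for all j ≥ 2 and the series Σ_{j≥1} ι_j u_j converges with sum −z·ι_0·u_1; (b) u_j = z^{1−j}·u_1 for all j ≥ 1 and ι(1/z)·u_1 = 0. In particular, the inverse power operator 𝒜 has eigenvector u to eigenvalue z (with u ≠ 0) if and only if u_j = z^{1−j}u_1 with u_1 a nonzero vector in the kernel of ι(1/z). -/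
import Mathlib


/-- Linearization identity for the inverse power operator `𝒜` associated with a
nonlinear matrix pencil `ι(λ) = Σ_k ι_k λ^k`: a sequence `(u_j)_{j≥1}` (indexed here
from `0`, so `u i` is the `(i+1)`-st component) satisfies the eigenvector equations
`u_{j−1} = z·u_j (j ≥ 2)` and `Σ_{j≥1} ι_j u_j = −z·ι_0·u_1` if and only if
`u_j = z^{1−j}·u_1` and `ι(1/z)·u_1 = 0`. -/
theorem invPower_eigenvector_iff_pencil_kernel
    (N : ℕ) (R : ℝ)
    (ιf : ℂ → Matrix (Fin N) (Fin N) ℂ) (ιc : ℕ → Matrix (Fin N) (Fin N) ℂ)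
    (hser : ∀ z : ℂ, ‖z‖ < R → HasSum (fun k => z ^ k • ιc k) (ιf z))
    (hunit : IsUnit (ιc 0)) (hc0 : ιc 0 = ιf 0)
    (z : ℂ) (hz : z ≠ 0) (hzR : ‖z⁻¹‖ < R)
    (u : ℕ → Fin N → ℂ) :
    ((∀ j : ℕ, u j = z • u (j + 1)) ∧
        HasSum (fun j : ℕ => (ιc (j + 1)).mulVec (u j))
          (-(z • (ιc 0).mulVec (u 0))))
      ↔ ((∀ j : ℕ, u j = (z⁻¹) ^ j • u 0) ∧ (ιf z⁻¹).mulVec (u 0) = 0) := by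
  have hsc : ∀ j : ℕ, z * z⁻¹ ^ (j + 1) = z⁻¹ ^ j := by
    intro j
    rw [pow_succ, mul_comm ((z⁻¹ : ℂ) ^ j), ← mul_assoc, mul_inv_cancel₀ hz, one_mul]
  have hrec : (∀ j : ℕ, u j = z • u (j + 1)) ↔ (∀ j : ℕ, u j = (z⁻¹) ^ j • u 0) := by
    constructor
    · intro h j
      induction j with
      | zero => simp
      | succ n ih =>
        have h1 := h n
        rw [ih] at h1
        have h2 : z⁻¹ • ((z⁻¹ : ℂ) ^ n • u 0) = z⁻¹ • (z • u (n + 1)) := by rw [h1]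
        rw [smul_smul, smul_smul, inv_mul_cancel₀ hz, one_smul, ← pow_succ'] at h2
        exact h2.symm
    · intro h j
      rw [h j, h (j + 1), smul_smul, hsc j]
  -- the matrix power series at z⁻¹, applied to the vector u 0
  have hS : HasSum (fun k : ℕ => (z⁻¹ : ℂ) ^ k • (ιc k).mulVec (u 0))
      ((ιf z⁻¹).mulVec (u 0)) := by
    have h0 := hser z⁻¹ hzR
    let L : Matrix (Fin N) (Fin N) ℂ →ₗ[ℂ] (Fin N → ℂ) :=
      { toFun := fun M => M.mulVec (u 0),
        map_add' := fun A B => Matrix.add_mulVec A B (u 0),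
        map_smul' := fun c A => Matrix.smul_mulVec c A (u 0) }
    have h1 := (LinearMap.toContinuousLinearMap L).hasSum h0
    have hco : ∀ M : Matrix (Fin N) (Fin N) ℂ,
        (LinearMap.toContinuousLinearMap L) M = M.mulVec (u 0) := fun M =>
      congrFun (LinearMap.coe_toContinuousLinearMap' L) M
    simp only [hco, Matrix.smul_mulVec] at h1
    exact h1
  -- the tail of the series
  have hS1 : HasSum (fun k : ℕ => (z⁻¹ : ℂ) ^ (k + 1) • (ιc (k + 1)).mulVec (u 0))
      ((ιf z⁻¹).mulVec (u 0) - (ιc 0).mulVec (u 0)) := by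
    refine (hasSum_nat_add_iff
      (f := fun k : ℕ => (z⁻¹ : ℂ) ^ k • (ιc k).mulVec (u 0)) 1).mpr ?_
    have hsum : (ιf z⁻¹).mulVec (u 0) - (ιc 0).mulVec (u 0)
        + ∑ i ∈ Finset.range 1, (z⁻¹ : ℂ) ^ i • (ιc i).mulVec (u 0)
        = (ιf z⁻¹).mulVec (u 0) := by
      simp
    rw [hsum]
    exact hS
  constructor
  · rintro ⟨h1, h2⟩
    have h1' := hrec.mp h1
    refine ⟨h1', ?_⟩
    have hterm : (fun j : ℕ => (ιc (j + 1)).mulVec (u j))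
        = fun j : ℕ => z • ((z⁻¹ : ℂ) ^ (j + 1) • (ιc (j + 1)).mulVec (u 0)) := by
      funext j
      rw [h1' j, Matrix.mulVec_smul, smul_smul, hsc j]
    rw [hterm] at h2
    have h3 := h2.const_smul (z⁻¹ : ℂ)
    simp only [smul_smul, ← mul_assoc, inv_mul_cancel₀ hz, one_mul, one_smul,
      smul_neg] at h3
    -- h3 : HasSum (fun j => z⁻¹^(j+1) • (ιc (j+1)).mulVec (u 0)) (-( (ιc 0).mulVec (u 0)))
    have h5 := hS1.unique h3
    exact sub_eq_neg_self.mp h5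
  · rintro ⟨h1, h2⟩
    refine ⟨hrec.mpr h1, ?_⟩
    have hterm : (fun j : ℕ => (ιc (j + 1)).mulVec (u j))
        = fun j : ℕ => z • ((z⁻¹ : ℂ) ^ (j + 1) • (ιc (j + 1)).mulVec (u 0)) := by
      funext j
      rw [h1 j, Matrix.mulVec_smul, smul_smul, hsc j]
    rw [hterm]
    have hS1' : HasSum (fun k : ℕ => (z⁻¹ : ℂ) ^ (k + 1) • (ιc (k + 1)).mulVec (u 0))
        (-((ιc 0).mulVec (u 0))) := by
      have h := hS1
      rw [h2, zero_sub] at h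
      exact h
    have h3 := hS1'.const_smul (z : ℂ)
    simpa only [smul_neg] using h3
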